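/- Let 𝔫 be a finite-dimensional nilpotent Lie algebra whose center 𝔷 is one-dimensional, and suppose the first term 𝔫₁ of the upper central series (the preimage in 𝔫 of the center of 𝔫/𝔷) has one-dimensional center. Then 𝔫 = 𝔫₁ + z_𝔫(𝔫₁) and 𝔫₁ ∩ z_𝔫(𝔫₁) = 𝔷, where z_𝔫(𝔫₁) denotes the centralizer of 𝔫₁ in 𝔫. -/

import Mathlib

/-- If a finite-dimensional nilpotent Lie algebra 𝔫 has
one-dimensional centre 𝔷, and the first term 𝔫₁ of the upper central series
(the preimage in 𝔫 of the centre of 𝔫/𝔷) has one-dimensional centre, then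
𝔫 = 𝔫₁ + z_𝔫(𝔫₁) and 𝔫₁ ∩ z_𝔫(𝔫₁) = 𝔷. -/
theorem nilpotent_sum_of_firstUpperCentral_centralizer
    (F : Type*) [Field F] [CharZero F]
    (N : Type*) [LieRing N] [LieAlgebra F N] [Module.Finite F N]
    [LieRing.IsNilpotent N]
    -- the centre 𝔷
    (z : Submodule F N) (hz : ∀ x : N, x ∈ z ↔ ∀ y : N, ⁅x, y⁆ = 0)
    (hz1 : Module.finrank F z = 1)
    -- 𝔫₁ : the preimage in 𝔫 of the centre of 𝔫/𝔷
    (n1 : LieIdeal F N) (hn1 : ∀ x : N, x ∈ n1 ↔ ∀ y : N, ⁅x, y⁆ ∈ z)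
    -- the centraliser z_𝔫(𝔫₁) of 𝔫₁ in 𝔫
    (zc : Submodule F N) (hzc : ∀ x : N, x ∈ zc ↔ ∀ y ∈ n1, ⁅x, y⁆ = (0 : N))
    -- the centre of 𝔫₁ is one-dimensional
    (c1 : Submodule F N)
    (hc1 : ∀ x : N, x ∈ c1 ↔ x ∈ n1 ∧ ∀ y ∈ n1, ⁅x, y⁆ = (0 : N))
    (hc1dim : Module.finrank F c1 = 1) :
    (∀ x : N, ∃ a ∈ n1, ∃ c ∈ zc, x = a + c) ∧
    (∀ x : N, (x ∈ n1 ∧ x ∈ zc) ↔ x ∈ z) := by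
  classical
  -- brackets with central elements vanish (on the left as well)
  have hcent : ∀ x y : N, y ∈ z → ⁅x, y⁆ = 0 := by
    intro x y hy
    rw [← lie_skew, (hz y).mp hy x, neg_zero]
  -- z ≤ n1, z ≤ zc, z ≤ c1
  have hzn1 : ∀ x ∈ z, x ∈ n1 := fun x hx => (hn1 x).mpr fun y => by
    rw [(hz x).mp hx y]; exact z.zero_mem
  have hzzc : ∀ x ∈ z, x ∈ zc := fun x hx => (hzc x).mpr fun y _ => (hz x).mp hx y
  have hzc1 : z ≤ c1 := fun x hx => (hc1 x).mpr ⟨hzn1 x hx, fun y _ => (hz x).mp hx y⟩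
  have hzeq : z = c1 :=
    Submodule.eq_of_le_of_finrank_eq hzc1 (hz1.trans hc1dim.symm)
  have second : ∀ x : N, (x ∈ n1 ∧ x ∈ zc) ↔ x ∈ z := by
    intro x
    constructor
    · rintro ⟨h1, h2⟩
      rw [hzeq]
      exact (hc1 x).mpr ⟨h1, fun y hy => (hzc x).mp h2 y hy⟩
    · intro hx; exact ⟨hzn1 x hx, hzzc x hx⟩
  refine ⟨?_, second⟩
  set V : Submodule F N := n1.toSubmodule with hV
  have hVmem : ∀ x : N, x ∈ V ↔ x ∈ n1 := fun x => Iff.rfl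
  have memz : ∀ (x : N) (y : V), ⁅x, (y : N)⁆ ∈ z := by
    intro x y
    rw [← lie_skew]
    exact z.neg_mem ((hn1 (y : N)).mp ((hVmem _).mp y.2) x)
  -- the map Φ : x ↦ (y ↦ ⁅x, y⁆)
  set Φ : N →ₗ[F] (V →ₗ[F] z) :=
    { toFun := fun x =>
        { toFun := fun y => ⟨⁅x, (y : N)⁆, memz x y⟩
          map_add' := fun a b => Subtype.ext (by simp)
          map_smul' := fun c a => Subtype.ext (by simp) }
      map_add' := fun a b => LinearMap.ext fun y => Subtype.ext (by simp)
      map_smul' := fun c a => LinearMap.ext fun y => Subtype.ext (by simp) } with hΦ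
  have hΦapply : ∀ (x : N) (y : V), ((Φ x y : z) : N) = ⁅x, (y : N)⁆ := fun _ _ => rfl
  set T : V →ₗ[F] (V →ₗ[F] z) := Φ.domRestrict V with hT
  -- z inside V
  set z' : Submodule F V := z.comap V.subtype with hz'
  set r : (V →ₗ[F] z) →ₗ[F] (z' →ₗ[F] z) := LinearMap.lcomp F z z'.subtype with hr
  set S : Submodule F (V →ₗ[F] z) := LinearMap.ker r with hS
  have hSmem : ∀ g : V →ₗ[F] z, g ∈ S ↔ ∀ y : V, (y : N) ∈ z → g y = 0 := by
    intro g
    constructor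
    · intro hg y hy
      exact congrFun (congrArg DFunLike.coe hg) (⟨y, hy⟩ : z')
    · intro h
      ext y
      exact congrArg Subtype.val (h y.1 y.2)
  -- Φ x always lands in S
  have hΦS : ∀ x : N, Φ x ∈ S := by
    intro x
    rw [hSmem]
    intro y hy
    exact Subtype.ext (by rw [hΦapply]; exact hcent x _ hy)
  -- kernel of T is z'
  have hker : LinearMap.ker T = z' := by
    ext x
    constructor
    · intro hx
      have hx' : ∀ y : V, ⁅(x : N), (y : N)⁆ = 0 := by
        intro y
        have := congrFun (congrArg DFunLike.coe (LinearMap.mem_ker.mp hx)) y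
        exact congrArg Subtype.val this
      have : (x : N) ∈ c1 := (hc1 _).mpr ⟨(hVmem _).mp x.2,
        fun y hy => hx' ⟨y, (hVmem _).mpr hy⟩⟩
      simpa [hz', Submodule.mem_comap, hzeq] using this
    · intro hx
      have hxz : (x : N) ∈ z := hx
      apply LinearMap.mem_ker.mpr
      refine LinearMap.ext fun y => Subtype.ext ?_
      exact (hz _).mp hxz (y : N)
  -- range of T is contained in S
  have hTS : LinearMap.range T ≤ S := by
    rintro g ⟨x, rfl⟩
    exact hΦS (x : N)
  -- r is surjective
  have hrsurj : Function.Surjective r := by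
    intro f
    obtain ⟨g, hg⟩ := LinearMap.exists_extend f
    exact ⟨g, hg⟩
  -- dimension bookkeeping
  have hfinV : FiniteDimensional F V := inferInstance
  have hz'dim : Module.finrank F z' = 1 := by
    rw [← hz1]
    exact LinearEquiv.finrank_eq
      (Submodule.comapSubtypeEquivOfLe (show z ≤ V from fun x hx => hzn1 x hx))
  have hrange_r : LinearMap.range r = ⊤ := LinearMap.range_eq_top.mpr hrsurj
  have hdim1 : Module.finrank F (LinearMap.range T) + 1 = Module.finrank F V := by
    have := LinearMap.finrank_range_add_finrank_ker T
    rwa [hker, hz'dim] at this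
  have hdim2 : Module.finrank F S + 1 = Module.finrank F V := by
    have h := LinearMap.finrank_range_add_finrank_ker r
    rw [hrange_r, ← hS] at h
    have h1 : Module.finrank F (⊤ : Submodule F (z' →ₗ[F] z)) = 1 := by
      rw [finrank_top, Module.finrank_linearMap, hz'dim, hz1]
    have h2 : Module.finrank F (V →ₗ[F] z) = Module.finrank F V := by
      rw [Module.finrank_linearMap, hz1, mul_one]
    omega
  have hrange_eq : LinearMap.range T = S := by
    apply Submodule.eq_of_le_of_finrank_eq hTS
    omega
  -- conclusion
  intro x
  have : Φ x ∈ LinearMap.range T := hrange_eq ▸ hΦS x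
  obtain ⟨a, ha⟩ := this
  refine ⟨(a : N), (hVmem _).mp a.2, x - (a : N), ?_, by abel⟩
  apply (hzc _).mpr
  intro y hy
  have hv : ((Φ (a : N)) (⟨y, (hVmem y).mpr hy⟩ : V) : z)
      = ((Φ x) (⟨y, (hVmem y).mpr hy⟩ : V) : z) := by
    rw [← ha]; rfl
  have := congrArg Subtype.val hv
  rw [hΦapply, hΦapply] at this
  rw [sub_lie, this, sub_self]
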